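/- Let q : (0,1) → ℝ be a continuous, strictly increasing, integrable function with m = ∫_0^1 q(u) du, and suppose q is not constant (so that lim_{p→0⁺} q(p) < m). Then for every θ > 0 there exists a unique p ∈ (0,1) such that q(p) > m and ∫_p^1 (q(u) − q(p)) du = θ·(q(p) − m); equivalently, the mixture FES_θ(p) = ((1−p)·ES(p) + θ·m)/(1−p+θ) equals q(p) at exactly one probability level p with q(p) > m. -/

import Mathlib

open MeasureTheory Set

lemma pel_integral_ge_const (q : ℝ → ℝ) {a b c : ℝ} (hab : a ≤ b)
    (hint : IntervalIntegrable q volume a b)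
    (h : ∀ u ∈ Set.Ioo a b, c ≤ q u) : (b - a) * c ≤ ∫ u in a..b, q u := by
  rw [intervalIntegral.integral_of_le hab, integral_Ioc_eq_integral_Ioo]
  have h1 : ∫ _ in Set.Ioo a b, c ≤ ∫ u in Set.Ioo a b, q u :=
    setIntegral_mono_on (integrableOn_const (by simp))
      (hint.1.mono_set Set.Ioo_subset_Ioc_self) measurableSet_Ioo h
  calc (b - a) * c = (volume (Set.Ioo a b)).toReal * c := by
        rw [Real.volume_Ioo, ENNReal.toReal_ofReal (by linarith)]
    _ ≤ _ := by simpa [setIntegral_const, smul_eq_mul, ENNReal.toReal_ofReal'] using h1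

lemma pel_integral_le_const (q : ℝ → ℝ) {a b c : ℝ} (hab : a ≤ b)
    (hint : IntervalIntegrable q volume a b)
    (h : ∀ u ∈ Set.Ioo a b, q u ≤ c) : (∫ u in a..b, q u) ≤ (b - a) * c := by
  rw [intervalIntegral.integral_of_le hab, integral_Ioc_eq_integral_Ioo]
  have h1 : ∫ u in Set.Ioo a b, q u ≤ ∫ _ in Set.Ioo a b, c :=
    setIntegral_mono_on (hint.1.mono_set Set.Ioo_subset_Ioc_self)
      (integrableOn_const (by simp)) measurableSet_Ioo h
  calc (∫ u in Set.Ioo a b, q u) ≤ (volume (Set.Ioo a b)).toReal * c := by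
        simpa [setIntegral_const, smul_eq_mul, ENNReal.toReal_ofReal'] using h1
    _ = (b - a) * c := by rw [Real.volume_Ioo, ENNReal.toReal_ofReal (by linarith)]

/-- For a continuous, strictly increasing, integrable quantile function `q`
on (0,1) with mean `m = ∫_0^1 q` that is not constant (equivalently, its limit as
`p → 0⁺`, i.e. its infimum over (0,1), is `< m`, which amounts to `∃ p ∈ (0,1), q p < m`),
for every `θ > 0` there is a unique `p ∈ (0,1)` with `q p > m` and
`∫_p^1 (q u - q p) du = θ·(q p - m)`; equivalently `FES_θ(p) = q p` at exactly one such level. -/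
theorem pel_exists_unique
    (q : ℝ → ℝ)
    (hq_cont : ContinuousOn q (Set.Ioo 0 1))
    (hq_mono : StrictMonoOn q (Set.Ioo 0 1))
    (hq_int : IntervalIntegrable q volume 0 1)
    (m : ℝ) (hm : m = ∫ u in (0:ℝ)..1, q u)
    (h_nonconst : ∃ p ∈ Set.Ioo (0:ℝ) 1, q p < m) :
    ∀ θ : ℝ, 0 < θ →
      ∃! p : ℝ, p ∈ Set.Ioo (0:ℝ) 1 ∧ m < q p ∧
        (∫ u in p..1, (q u - q p)) = θ * (q p - m) ∧
        ((1 - p) * ((1 - p)⁻¹ * ∫ u in p..1, q u) + θ * m) / (1 - p + θ) = q p := by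
  intro θ hθ
  obtain ⟨p0, hp0, hqp0⟩ := h_nonconst
  have h01 : Set.uIcc (0:ℝ) 1 = Set.Icc 0 1 := Set.uIcc_of_le zero_le_one
  have hIntSub : ∀ a b : ℝ, a ∈ Set.Icc (0:ℝ) 1 → b ∈ Set.Icc (0:ℝ) 1 →
      IntervalIntegrable q volume a b := fun a b ha hb =>
    hq_int.mono_set (Set.uIcc_subset_uIcc (by rwa [h01]) (by rwa [h01]))
  set I : ℝ → ℝ := fun p => ∫ u in p..1, q u with hI
  set G : ℝ → ℝ := fun p => I p - (1 - p + θ) * q p + θ * m with hG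
  -- splitting of I
  have hsplit : ∀ a b : ℝ, a ∈ Set.Icc (0:ℝ) 1 → b ∈ Set.Icc (0:ℝ) 1 →
      I a = (∫ u in a..b, q u) + I b := by
    intro a b ha hb
    exact (intervalIntegral.integral_add_adjacent_intervals
      (hIntSub a b ha hb) (hIntSub b 1 hb (Set.right_mem_Icc.2 zero_le_one))).symm
  -- positivity of the tail integral: (1-p) * q p < I p for p ∈ Ioo 0 1
  have hpos : ∀ p ∈ Set.Ioo (0:ℝ) 1, (1 - p) * q p < I p := by
    intro p hp
    set c : ℝ := (p + 1) / 2 with hc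
    have hcmem : c ∈ Set.Ioo (0:ℝ) 1 := ⟨by nlinarith [hp.1, hp.2], by nlinarith [hp.2]⟩
    have hpc : p < c := by rw [hc]; linarith [hp.2]
    have h1 : (c - p) * q p ≤ ∫ u in p..c, q u := by
      refine pel_integral_ge_const q hpc.le
        (hIntSub p c ⟨hp.1.le, hp.2.le⟩ ⟨hcmem.1.le, hcmem.2.le⟩) ?_
      intro u hu
      exact (hq_mono.le_iff_le hp ⟨lt_trans hp.1 hu.1, lt_trans hu.2 hcmem.2⟩).2
        (le_of_lt hu.1)
    have h2 : (1 - c) * q c ≤ I c := by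
      refine pel_integral_ge_const q hcmem.2.le
        (hIntSub c 1 ⟨hcmem.1.le, hcmem.2.le⟩ (Set.right_mem_Icc.2 zero_le_one)) ?_
      intro u hu
      exact (hq_mono.le_iff_le hcmem ⟨lt_trans hcmem.1 hu.1, hu.2⟩).2 (le_of_lt hu.1)
    have hqq : q p < q c := hq_mono hp hcmem hpc
    have := hsplit p c ⟨hp.1.le, hp.2.le⟩ ⟨hcmem.1.le, hcmem.2.le⟩
    rw [this]
    have hc1 : 1 - c > 0 := by linarith [hcmem.2]
    nlinarith
  -- strict antitonicity of G
  have hanti : StrictAntiOn G (Set.Ioo 0 1) := by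
    intro p1 hp1 p2 hp2 h12
    have hint12 : (p2 - p1) * q p1 ≤ ∫ u in p1..p2, q u := by
      refine pel_integral_ge_const q h12.le
        (hIntSub p1 p2 ⟨hp1.1.le, hp1.2.le⟩ ⟨hp2.1.le, hp2.2.le⟩) ?_
      intro u hu
      exact (hq_mono.le_iff_le hp1 ⟨lt_trans hp1.1 hu.1, lt_trans hu.2 hp2.2⟩).2
        (le_of_lt hu.1)
    have hqq : q p1 < q p2 := hq_mono hp1 hp2 h12
    have hIeq := hsplit p1 p2 ⟨hp1.1.le, hp1.2.le⟩ ⟨hp2.1.le, hp2.2.le⟩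
    have h2 : 1 - p2 + θ > 0 := by linarith [hp2.2]
    simp only [hG]
    rw [hIeq]
    nlinarith
  -- continuity of I on Icc 0 1
  have hIcont : ContinuousOn I (Set.Icc 0 1) := by
    have : IntegrableOn q (Set.uIcc 0 1) volume := by
      rw [h01, integrableOn_Icc_iff_integrableOn_Ioc]
      exact hq_int.1
    have := intervalIntegral.continuousOn_primitive_interval_left (f := q) (μ := volume)
      (a := 0) (b := 1) this
    rwa [h01] at this
  -- continuity of G on Ioo 0 1
  have hGcont : ContinuousOn G (Set.Ioo 0 1) := by
    refine ContinuousOn.add (ContinuousOn.sub (hIcont.mono Set.Ioo_subset_Icc_self) ?_)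
      continuousOn_const
    exact ContinuousOn.mul (by fun_prop) hq_cont
  -- existence of p1 with q p1 > m
  have hex_hi : ∃ p1 ∈ Set.Ioo (0:ℝ) 1, m < q p1 := by
    by_contra hcon
    push_neg at hcon
    have h1 : (∫ u in (0:ℝ)..p0, q u) ≤ (p0 - 0) * q p0 := by
      refine pel_integral_le_const q hp0.1.le
        (hIntSub 0 p0 (Set.left_mem_Icc.2 zero_le_one) ⟨hp0.1.le, hp0.2.le⟩) ?_
      intro u hu
      exact (hq_mono.le_iff_le ⟨hu.1, lt_trans hu.2 hp0.2⟩ hp0).2 (le_of_lt hu.2)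
    have h2 : I p0 ≤ (1 - p0) * m := by
      refine pel_integral_le_const q hp0.2.le
        (hIntSub p0 1 ⟨hp0.1.le, hp0.2.le⟩ (Set.right_mem_Icc.2 zero_le_one)) ?_
      intro u hu
      exact hcon u ⟨lt_trans hp0.1 hu.1, hu.2⟩
    have hI0 : I 0 = m := hm.symm
    have := hsplit 0 p0 (Set.left_mem_Icc.2 zero_le_one) ⟨hp0.1.le, hp0.2.le⟩
    rw [hI0] at this
    nlinarith [hp0.1, hp0.2]
  obtain ⟨p1, hp1, hqp1⟩ := hex_hi
  -- G is eventually positive near 0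
  have hI0lim : Filter.Tendsto I (nhdsWithin 0 (Set.Ioi 0)) (nhds m) := by
    have h0 : (0:ℝ) ∈ Set.Icc (0:ℝ) 1 := Set.left_mem_Icc.2 zero_le_one
    have := (hIcont 0 h0).mono_left (nhdsWithin_mono 0 (Set.Ioo_subset_Icc_self (a := (0:ℝ)) (b := 1)))
    have h2 : Filter.Tendsto I (nhdsWithin 0 (Set.Ioo 0 1)) (nhds m) := by
      rw [hm]; exact this
    exact h2.mono_left (nhdsWithin_le_of_mem (Ioo_mem_nhdsGT zero_lt_one))
  -- pick a near 0 with G a > 0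
  have hev0 : ∀ᶠ p in nhdsWithin 0 (Set.Ioi 0),
      p ∈ Set.Ioo (0:ℝ) 1 ∧ p < p0 ∧ 0 < I p - (1 - p + θ) * q p0 + θ * m := by
    have e1 : ∀ᶠ p in nhdsWithin 0 (Set.Ioi 0), p ∈ Set.Ioo (0:ℝ) 1 :=
      Ioo_mem_nhdsGT zero_lt_one
    have e2 : ∀ᶠ p in nhdsWithin 0 (Set.Ioi 0), p < p0 := by
      apply eventually_nhdsWithin_of_eventually_nhds
      exact eventually_lt_nhds hp0.1
    have e3 : ∀ᶠ p in nhdsWithin 0 (Set.Ioi 0), 0 < I p - (1 - p + θ) * q p0 + θ * m := by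
      have hlim : Filter.Tendsto (fun p => I p - (1 - p + θ) * q p0 + θ * m)
          (nhdsWithin 0 (Set.Ioi 0)) (nhds (m - (1 - 0 + θ) * q p0 + θ * m)) := by
        apply Filter.Tendsto.add _ tendsto_const_nhds
        apply Filter.Tendsto.sub hI0lim
        apply Filter.Tendsto.mul _ tendsto_const_nhds
        exact (Filter.Tendsto.const_sub _ (Filter.tendsto_id.mono_left nhdsWithin_le_nhds)).add
          tendsto_const_nhds
      have hlimpos : 0 < m - (1 - 0 + θ) * q p0 + θ * m := by nlinarith
      exact hlim.eventually (lt_mem_nhds hlimpos)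
    filter_upwards [e1, e2, e3] with p h1 h2 h3 using ⟨h1, h2, h3⟩
  obtain ⟨a, ha_mem, ha_lt, ha_bound⟩ := hev0.exists
  have hGa : 0 < G a := by
    have hqa : q a ≤ q p0 := (hq_mono.le_iff_le ha_mem hp0).2 ha_lt.le
    have h1 : (0:ℝ) < 1 - a + θ := by linarith [ha_mem.2]
    simp only [hG]
    nlinarith
  -- pick b near 1 with G b < 0
  have hI1lim : Filter.Tendsto I (nhdsWithin 1 (Set.Iio 1)) (nhds 0) := by
    have h1 : (1:ℝ) ∈ Set.Icc (0:ℝ) 1 := Set.right_mem_Icc.2 zero_le_one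
    have h2 : Filter.Tendsto I (nhdsWithin 1 (Set.Ioo 0 1)) (nhds (I 1)) :=
      (hIcont 1 h1).mono_left (nhdsWithin_mono 1 Set.Ioo_subset_Icc_self)
    have hI1 : I 1 = 0 := intervalIntegral.integral_same
    rw [hI1] at h2
    exact h2.mono_left (nhdsWithin_le_of_mem (Ioo_mem_nhdsLT zero_lt_one))
  have hev1 : ∀ᶠ p in nhdsWithin 1 (Set.Iio 1),
      p ∈ Set.Ioo (0:ℝ) 1 ∧ p1 < p ∧ I p - (1 - p + θ) * q p1 + θ * m < 0 := by
    have e1 : ∀ᶠ p in nhdsWithin 1 (Set.Iio 1), p ∈ Set.Ioo (0:ℝ) 1 :=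
      Ioo_mem_nhdsLT zero_lt_one
    have e2 : ∀ᶠ p in nhdsWithin 1 (Set.Iio 1), p1 < p := by
      apply eventually_nhdsWithin_of_eventually_nhds
      exact eventually_gt_nhds hp1.2
    have e3 : ∀ᶠ p in nhdsWithin 1 (Set.Iio 1), I p - (1 - p + θ) * q p1 + θ * m < 0 := by
      have hlim : Filter.Tendsto (fun p => I p - (1 - p + θ) * q p1 + θ * m)
          (nhdsWithin 1 (Set.Iio 1)) (nhds (0 - (1 - 1 + θ) * q p1 + θ * m)) := by
        apply Filter.Tendsto.add _ tendsto_const_nhds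
        apply Filter.Tendsto.sub hI1lim
        apply Filter.Tendsto.mul _ tendsto_const_nhds
        exact (Filter.Tendsto.const_sub _ (Filter.tendsto_id.mono_left nhdsWithin_le_nhds)).add
          tendsto_const_nhds
      have hlimneg : 0 - (1 - 1 + θ) * q p1 + θ * m < 0 := by nlinarith
      exact hlim.eventually (gt_mem_nhds hlimneg)
    filter_upwards [e1, e2, e3] with p h1 h2 h3 using ⟨h1, h2, h3⟩
  obtain ⟨b, hb_mem, hb_gt, hb_bound⟩ := hev1.exists
  have hGb : G b < 0 := by
    have hqb : q p1 ≤ q b := (hq_mono.le_iff_le hp1 hb_mem).2 hb_gt.le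
    have h1 : (0:ℝ) < 1 - b + θ := by linarith [hb_mem.2]
    simp only [hG]
    nlinarith
  -- a < b
  have hab : a < b := by
    by_contra hc
    push_neg at hc
    rcases eq_or_lt_of_le hc with h | h
    · rw [h] at hGb; linarith
    · exact absurd (hanti hb_mem ha_mem h) (by linarith)
  -- IVT
  have hGc : ∃ c ∈ Set.Icc a b, G c = 0 := by
    have hsub : Set.Icc a b ⊆ Set.Ioo 0 1 := fun x hx => ⟨lt_of_lt_of_le ha_mem.1 hx.1,
      lt_of_le_of_lt hx.2 hb_mem.2⟩
    have h0 : (0:ℝ) ∈ Set.Icc (G b) (G a) := ⟨hGb.le, hGa.le⟩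
    obtain ⟨c, hc1, hc2⟩ := intermediate_value_Icc' hab.le (hGcont.mono hsub) h0
    exact ⟨c, hc1, hc2⟩
  obtain ⟨c, hc_mem, hGc0⟩ := hGc
  have hc_Ioo : c ∈ Set.Ioo (0:ℝ) 1 := ⟨lt_of_lt_of_le ha_mem.1 hc_mem.1,
    lt_of_le_of_lt hc_mem.2 hb_mem.2⟩
  -- rewriting the integral condition
  have hGzero_iff : ∀ p ∈ Set.Ioo (0:ℝ) 1,
      (∫ u in p..1, (q u - q p)) = I p - (1 - p) * q p := by
    intro p hp
    rw [intervalIntegral.integral_sub (hIntSub p 1 ⟨hp.1.le, hp.2.le⟩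
      (Set.right_mem_Icc.2 zero_le_one)) intervalIntegrable_const,
      intervalIntegral.integral_const, smul_eq_mul]
  have hmain : ∀ p ∈ Set.Ioo (0:ℝ) 1, G p = 0 →
      m < q p ∧ (∫ u in p..1, (q u - q p)) = θ * (q p - m) ∧
      ((1 - p) * ((1 - p)⁻¹ * I p) + θ * m) / (1 - p + θ) = q p := by
    intro p hp hGp
    have hIp : (1 - p) * q p < I p := hpos p hp
    have hGp' : I p - (1 - p + θ) * q p + θ * m = 0 := hGp
    have hqm : m < q p := by nlinarith
    refine ⟨hqm, ?_, ?_⟩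
    · rw [hGzero_iff p hp]; linarith
    · have h1p : (1:ℝ) - p ≠ 0 := by
        intro h
        have := sub_eq_zero.1 h
        linarith [hp.2]
      have h1pθ : (1:ℝ) - p + θ ≠ 0 := by
        have : (0:ℝ) < 1 - p + θ := by linarith [hp.2]
        linarith
      field_simp
      linarith
  -- existence part
  refine ⟨c, ⟨hc_Ioo, (hmain c hc_Ioo hGc0).1, (hmain c hc_Ioo hGc0).2.1,
    (hmain c hc_Ioo hGc0).2.2⟩, ?_⟩
  -- uniqueness part
  intro p hp
  obtain ⟨hp_Ioo, hp_qm, hp_eq, _⟩ := hp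
  have hGp : G p = 0 := by
    have := hGzero_iff p hp_Ioo
    rw [this] at hp_eq
    simp only [hG]
    linarith
  exact hanti.injOn hp_Ioo hc_Ioo (hGp.trans hGc0.symm)
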